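/- Let 0 < α < 1 and λ > 0. For every t > 0, the function t ↦ E_α(−λ t^α) is differentiable at t with derivative (d/dt) E_α(−λ t^α) = −λ t^{α−1} E_{α,α}(−λ t^α). -/

import Mathlib

open Real Set

/-- Two-parameter Mittag-Leffler function of a real argument; terms at poles of Γ
are interpreted as 0 (in Lean, division by Γ = 0 gives 0). -/
noncomputable def mittagLeffler (α σ x : ℝ) : ℝ :=
  ∑' k : ℕ, x ^ k / Real.Gamma (α * (k : ℝ) + σ)

/-- Lower bound for the Gamma function: `Γ(αm+1) ≥ A^(αm-1)/e^A` when `αm ≥ 1`, `A ≥ 1`. -/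
lemma gamma_lb_aux (α A : ℝ) (hA : 1 ≤ A) (m : ℕ) (hm : 1 ≤ α * m) :
    A ^ (α * m - 1) / Real.exp A ≤ Real.Gamma (α * m + 1) := by
  set n := ⌊α * (m : ℝ)⌋₊ with hn
  have hαm0 : (0:ℝ) ≤ α * m := by linarith
  have hn1 : 1 ≤ n := Nat.le_floor (by exact_mod_cast hm)
  have hfl : (n : ℝ) ≤ α * m := Nat.floor_le hαm0
  have hfl2 : α * m - 1 ≤ (n : ℝ) := by
    have := Nat.lt_floor_add_one (α * (m : ℝ)); linarith
  have h1 : A ^ (α * m - 1) ≤ A ^ (n : ℝ) :=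
    Real.rpow_le_rpow_of_exponent_le hA hfl2
  have h2 : A ^ ((n : ℝ)) = A ^ n := Real.rpow_natCast A n
  have h3 : A ^ n / Real.exp A ≤ (n.factorial : ℝ) := by
    rw [div_le_iff₀ (Real.exp_pos A)]
    have := Real.pow_div_factorial_le_exp A (by linarith) n
    have hfpos : (0:ℝ) < (n.factorial : ℝ) := by exact_mod_cast Nat.factorial_pos n
    rw [div_le_iff₀ hfpos] at this
    linarith [this]
  have h4 : (n.factorial : ℝ) = Real.Gamma ((n : ℝ) + 1) := (Real.Gamma_nat_eq_factorial n).symm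
  have h5 : Real.Gamma ((n : ℝ) + 1) ≤ Real.Gamma (α * m + 1) := by
    have hn1' : (1:ℝ) ≤ (n : ℝ) := by exact_mod_cast hn1
    exact Real.Gamma_strictMonoOn_Ici.monotoneOn (by simp [mem_Ici]; linarith)
      (by simp [mem_Ici]; linarith) (by linarith)
  calc A ^ (α * m - 1) / Real.exp A ≤ A ^ n / Real.exp A := by
        rw [← h2]; gcongr
    _ ≤ (n.factorial : ℝ) := h3
    _ = Real.Gamma ((n:ℝ) + 1) := h4
    _ ≤ Real.Gamma (α * m + 1) := h5

/-- Summability of the (weighted) Mittag-Leffler coefficient series. -/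
lemma summable_ml_aux (α r : ℝ) (hα : 0 < α) (hr : 1 ≤ r) :
    Summable (fun k : ℕ => ((k : ℝ) + 1) * r ^ k / Real.Gamma (α * k + 1)) := by
  set A := (2 * r) ^ (1 / α) with hAdef
  have h2r : (1:ℝ) ≤ 2 * r := by linarith
  have h2rpos : (0:ℝ) < 2 * r := by linarith
  have hA1 : 1 ≤ A := Real.one_le_rpow h2r (by positivity)
  have hApos : 0 < A := lt_of_lt_of_le one_pos hA1
  have hAα : A ^ α = 2 * r := by
    rw [hAdef, ← Real.rpow_mul h2rpos.le, one_div, inv_mul_cancel₀ hα.ne', Real.rpow_one]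
  set N := ⌈1 / α⌉₊ with hN
  rw [← summable_nat_add_iff N]
  have hb : Summable (fun k : ℕ => (Real.exp A * A) * (((k + N : ℕ) + 1 : ℝ) * (1/2 : ℝ) ^ (k + N))) := by
    apply Summable.mul_left
    apply (summable_nat_add_iff (f := fun k : ℕ => ((k : ℝ) + 1) * (1/2:ℝ)^k) N).2
    have h1 : Summable (fun k : ℕ => (k : ℝ) * (1/2 : ℝ) ^ k) := by
      simpa using summable_pow_mul_geometric_of_norm_lt_one 1 (r := (1/2 : ℝ)) (by norm_num)
    have h2 : Summable (fun k : ℕ => (1/2 : ℝ) ^ k) :=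
      summable_geometric_of_lt_one (by norm_num) (by norm_num)
    exact (h1.add h2).congr (fun k => by ring)
  apply hb.of_nonneg_of_le
  · intro k
    have hG : 0 < Real.Gamma (α * (k + N : ℕ) + 1) :=
      Real.Gamma_pos_of_pos (by positivity)
    positivity
  · intro k
    set m := k + N with hmdef
    have hmN : (N : ℝ) ≤ (m : ℝ) := by exact_mod_cast Nat.le_add_left N k
    have hm : 1 ≤ α * m := by
      have h1 : (1/α : ℝ) ≤ N := Nat.le_ceil _
      have : (1/α : ℝ) ≤ (m : ℝ) := le_trans h1 hmN
      calc (1:ℝ) = α * (1/α) := by field_simp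
        _ ≤ α * m := by gcongr
    have hG := gamma_lb_aux α A hA1 m hm
    have hGpos : 0 < Real.Gamma (α * m + 1) := Real.Gamma_pos_of_pos (by positivity)
    have hlbpos : 0 < A ^ (α * m - 1) / Real.exp A := by positivity
    calc ((m : ℝ) + 1) * r ^ m / Real.Gamma (α * m + 1)
        ≤ ((m : ℝ) + 1) * r ^ m / (A ^ (α * m - 1) / Real.exp A) := by
          gcongr
      _ = (Real.exp A * A) * (((m : ℕ) + 1 : ℝ) * (1/2 : ℝ) ^ m) := by
          have hpow : A ^ (α * m - 1) = (2 * r) ^ m / A := by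
            rw [Real.rpow_sub hApos, Real.rpow_one]
            congr 1
            rw [Real.rpow_mul hApos.le, hAα, Real.rpow_natCast]
          rw [hpow, mul_pow]
          have hrpos : (0:ℝ) < r := by linarith
          have hA0 : A ≠ 0 := hApos.ne'
          have hr0 : r ≠ 0 := hrpos.ne'
          simp only [one_div, inv_pow]
          field_simp

theorem hasDerivAt_mittagLeffler_neg (α lam t : ℝ) (hα0 : 0 < α) (hα1 : α < 1)
    (hlam : 0 < lam) (ht : 0 < t) :
    HasDerivAt (fun s : ℝ => mittagLeffler α 1 (-lam * s ^ α))
      (-lam * t ^ (α - 1) * mittagLeffler α α (-lam * t ^ α)) t := by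
  have ht2 : (0:ℝ) < t / 2 := by linarith
  set U : Set ℝ := Ioo (t / 2) (t + 1) with hU
  have htU : t ∈ U := by constructor <;> [linarith; linarith]
  set r : ℝ := max (lam * (t + 1) ^ α) 1 with hrdef
  have hr1 : (1:ℝ) ≤ r := le_max_right _ _
  have hrpos : (0:ℝ) < r := by linarith
  set g : ℕ → ℝ → ℝ := fun k s => (-lam * s ^ α) ^ k / Real.Gamma (α * k + 1) with hg
  set g' : ℕ → ℝ → ℝ := fun k x =>
    ((k : ℝ) * (-lam * x ^ α) ^ (k - 1) * (-lam * (α * x ^ (α - 1)))) / Real.Gamma (α * k + 1)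
    with hg'
  set u : ℕ → ℝ := fun k =>
    (lam * α * (t / 2) ^ (α - 1)) * (((k : ℝ) + 1) * r ^ k / Real.Gamma (α * k + 1)) with hu
  have hGpos : ∀ k : ℕ, 0 < Real.Gamma (α * k + 1) :=
    fun k => Real.Gamma_pos_of_pos (by positivity)
  have hSu : Summable u := (summable_ml_aux α r hα0 hr1).mul_left _
  -- derivative of each term on U
  have hderiv : ∀ k : ℕ, ∀ x ∈ U, HasDerivAt (g k) (g' k x) x := by
    intro k x hx
    have hx0 : 0 < x := lt_trans ht2 hx.1
    exact (((Real.hasDerivAt_rpow_const (Or.inl hx0.ne')).const_mul (-lam)).pow k).div_const _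
  -- key pointwise bound for |-lam x^α| etc.
  have hbound : ∀ k : ℕ, ∀ x ∈ U, ‖g' k x‖ ≤ u k := by
    intro k x hx
    have hx0 : 0 < x := lt_trans ht2 hx.1
    have hxle : x ≤ t + 1 := hx.2.le
    have habs : |(-lam * x ^ α)| = lam * x ^ α := by
      rw [abs_mul, abs_neg, abs_of_pos hlam, abs_of_pos (Real.rpow_pos_of_pos hx0 α)]
    have h1 : lam * x ^ α ≤ r := by
      refine le_trans ?_ (le_max_left _ _)
      have : x ^ α ≤ (t + 1) ^ α := Real.rpow_le_rpow hx0.le hxle hα0.le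
      nlinarith
    have h2 : x ^ (α - 1) ≤ (t / 2) ^ (α - 1) :=
      Real.rpow_le_rpow_of_nonpos ht2 hx.1.le (by linarith)
    have hxα1 : (0:ℝ) < x ^ (α - 1) := Real.rpow_pos_of_pos hx0 (α - 1)
    have hnum : |(k : ℝ) * (-lam * x ^ α) ^ (k - 1) * (-lam * (α * x ^ (α - 1)))|
        ≤ ((k : ℝ) + 1) * r ^ k * (lam * α * (t / 2) ^ (α - 1)) := by
      rw [abs_mul, abs_mul, abs_pow, habs, abs_mul, abs_neg, abs_of_pos hlam, abs_mul,
        abs_of_pos hα0, abs_of_pos hxα1, Nat.abs_cast]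
      have hp : (lam * x ^ α) ^ (k - 1) ≤ r ^ k := by
        calc (lam * x ^ α) ^ (k - 1) ≤ r ^ (k - 1) :=
              pow_le_pow_left₀ (by positivity) h1 _
          _ ≤ r ^ k := pow_le_pow_right₀ hr1 (Nat.sub_le k 1)
      have hk1 : (k : ℝ) ≤ (k : ℝ) + 1 := by linarith
      calc (k : ℝ) * (lam * x ^ α) ^ (k - 1) * (lam * (α * x ^ (α - 1)))
          ≤ ((k : ℝ) + 1) * r ^ k * (lam * (α * (t / 2) ^ (α - 1))) := by
            refine mul_le_mul (mul_le_mul hk1 hp (by positivity) (by positivity))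
              ?_ (by positivity) (by positivity)
            exact mul_le_mul_of_nonneg_left
              (mul_le_mul_of_nonneg_left h2 hα0.le) hlam.le
        _ = ((k : ℝ) + 1) * r ^ k * (lam * α * (t / 2) ^ (α - 1)) := by ring
    calc ‖g' k x‖ = |(k : ℝ) * (-lam * x ^ α) ^ (k - 1) * (-lam * (α * x ^ (α - 1)))| /
          Real.Gamma (α * k + 1) := by
          rw [hg', Real.norm_eq_abs, abs_div, abs_of_pos (hGpos k)]
      _ ≤ ((k : ℝ) + 1) * r ^ k * (lam * α * (t / 2) ^ (α - 1)) / Real.Gamma (α * k + 1) :=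
          (div_le_div_iff_of_pos_right (hGpos k)).2 hnum
      _ = u k := by rw [hu]; ring
  -- summability at the point t
  have hg0 : Summable fun k => g k t := by
    apply Summable.of_abs
    apply ((summable_ml_aux α r hα0 hr1)).of_nonneg_of_le (fun k => abs_nonneg _)
    intro k
    have habs : |(-lam * t ^ α)| = lam * t ^ α := by
      rw [abs_mul, abs_neg, abs_of_pos hlam, abs_of_pos (Real.rpow_pos_of_pos ht α)]
    rw [hg, abs_div, abs_of_pos (hGpos k), abs_pow, habs]
    refine (div_le_div_iff_of_pos_right (hGpos k)).2 ?_
    have hltr : lam * t ^ α ≤ r := by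
      refine le_trans ?_ (le_max_left _ _)
      have : t ^ α ≤ (t + 1) ^ α := Real.rpow_le_rpow ht.le (by linarith) hα0.le
      nlinarith
    calc (lam * t ^ α) ^ k ≤ r ^ k := pow_le_pow_left₀ (by positivity) hltr _
      _ = 1 * r ^ k := (one_mul _).symm
      _ ≤ ((k:ℝ) + 1) * r ^ k := by
          have h0k : (0:ℝ) ≤ (k:ℝ) := Nat.cast_nonneg k
          have hrk : (0:ℝ) ≤ r ^ k := by positivity
          nlinarith
  have key : HasDerivAt (fun z => ∑' k : ℕ, g k z) (∑' k : ℕ, g' k t) t :=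
    hasDerivAt_tsum_of_isPreconnected hSu isOpen_Ioo isPreconnected_Ioo
      hderiv hbound htU hg0 htU
  -- identify the sum of derivatives
  have hSg' : Summable fun k => g' k t :=
    Summable.of_norm_bounded hSu (fun k => hbound k t htU)
  have hterm : ∀ j : ℕ, g' (j + 1) t =
      (-lam * t ^ (α - 1)) * ((-lam * t ^ α) ^ j / Real.Gamma (α * j + α)) := by
    intro j
    have hpos : (0:ℝ) < α * j + α := by positivity
    have hGj : 0 < Real.Gamma (α * j + α) := Real.Gamma_pos_of_pos hpos
    have hGamma : Real.Gamma (α * (j + 1 : ℕ) + 1) = (α * j + α) * Real.Gamma (α * j + α) := by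
      have : α * ((j : ℝ) + 1) + 1 = (α * j + α) + 1 := by ring
      rw [Nat.cast_add, Nat.cast_one, this, Real.Gamma_add_one hpos.ne']
    simp only [hg']
    rw [hGamma]
    have hk1 : (j + 1) - 1 = j := by omega
    rw [hk1, Nat.cast_add, Nat.cast_one]
    field_simp
  have hsum : (∑' k : ℕ, g' k t) = -lam * t ^ (α - 1) * mittagLeffler α α (-lam * t ^ α) := by
    rw [Summable.tsum_eq_zero_add hSg']
    have h0 : g' 0 t = 0 := by simp [hg']
    rw [h0, zero_add]
    calc (∑' j : ℕ, g' (j + 1) t)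
        = ∑' j : ℕ, (-lam * t ^ (α - 1)) * ((-lam * t ^ α) ^ j / Real.Gamma (α * j + α)) :=
          tsum_congr hterm
      _ = (-lam * t ^ (α - 1)) * ∑' j : ℕ, ((-lam * t ^ α) ^ j / Real.Gamma (α * j + α)) :=
          tsum_mul_left
      _ = -lam * t ^ (α - 1) * mittagLeffler α α (-lam * t ^ α) := by rw [mittagLeffler]
  rw [← hsum]
  have hfun : (fun s : ℝ => mittagLeffler α 1 (-lam * s ^ α)) = fun z => ∑' k : ℕ, g k z := by
    funext z
    rw [mittagLeffler, hg]
  rw [hfun]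
  exact key
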